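/- Let M ⊂ R^n be a closed submanifold with reach ν, let α ∈ (0, ν), ρ ∈ (α, 2ν − α), x ∈ M, and suppose p ∈ S_ρ(x) ∩ S_{α'}(M) for some α' ∈ [0, α] is a point of tangency (the two hypersurfaces are tangent at p, or p ∈ M when α' = 0 and the line xp is normal to M at the nearest point). Then a contradiction follows; i.e., no such tangency point exists. Equivalently: if y ∈ M is the nearest point of M to p and the segment from x through p extends to y with |x − y| = ρ + α' < 2ν, then the midpoint q of [x, y] has two distinct points of M at distance ≤ |q − y| < ν, contradicting uniqueness of nearest points within the reach. -/

import Mathlib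

set_option maxHeartbeats 2000000

open Metric
open scoped RealInnerProductSpace

/-- No tangency configuration exists.  Let `M ⊆ ℝⁿ` be closed with
reach `ν > 0` (unique nearest points within distance `ν`), `x ∈ M`,
`α ∈ (0,ν)`, `α' ∈ [0,α]`, `ρ ∈ (α, 2ν − α)`.  Suppose `p ∉ M` is a point with
`dist p x = ρ`, `d(p,M) = α'` realized at a nearest point `y ∈ M`, and `p` lies
on the segment from `x` to `y` with `dist x y = ρ + α'` (so `x`, `p`, `y` are
collinear and the segment from `x` through `p` extends to the nearest point `y`).
Then a contradiction follows: the midpoint of `[x,y]` would be a point within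
the reach having two distinct nearest points of `M`. -/
theorem stmt10 {n : ℕ} (M : Set (EuclideanSpace ℝ (Fin n))) (ν : ℝ) (hν : 0 < ν)
    (hMne : M.Nonempty) (hMcl : IsClosed M)
    (hreach : ∀ y, Metric.infDist y M < ν →
      ∃! z, z ∈ M ∧ dist y z = Metric.infDist y M)
    (x p y : EuclideanSpace ℝ (Fin n)) (α α' ρ : ℝ)
    (hα : α ∈ Set.Ioo 0 ν) (hα' : α' ∈ Set.Icc 0 α) (hρ : ρ ∈ Set.Ioo α (2 * ν - α))
    (hx : x ∈ M) (hy : y ∈ M) (hpM : p ∉ M)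
    (hpx : dist p x = ρ) (hpd : Metric.infDist p M = α') (hpy : dist p y = α')
    (hseg : p ∈ segment ℝ x y) (hxy : dist x y = ρ + α') :
    False := by
  classical
  obtain ⟨hα0, hαν⟩ := hα
  obtain ⟨hα'0, hα'α⟩ := hα'
  obtain ⟨hρα, hρν⟩ := hρ
  -- α' > 0, else p = y ∈ M
  rcases eq_or_lt_of_le hα'0 with h0 | hα'pos
  · have hp0 : dist p y = 0 := by rw [hpy, ← h0]
    rw [dist_eq_zero] at hp0
    exact hpM (hp0 ▸ hy)
  have hα'ν : α' < ν := lt_of_le_of_lt hα'α hαν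
  set T : ℝ := (ρ + α') / 2 with hT
  have hTν : T < ν := by rw [hT]; linarith
  have haT : α' < T := by rw [hT]; linarith
  have hTpos : 0 < T := lt_trans hα'pos haT
  set Δ : ℝ := T - α' with hΔdef
  have hΔpos : 0 < Δ := by rw [hΔdef]; linarith
  -- foot map
  have footEx : ∀ q : EuclideanSpace ℝ (Fin n), ∃ z, z ∈ M ∧ dist q z = infDist q M := by
    intro q
    obtain ⟨z, hzM, hz⟩ := hMcl.exists_infDist_eq_dist hMne q
    exact ⟨z, hzM, hz.symm⟩
  choose ξ hξM hξd using footEx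
  -- uniqueness of feet within reach
  have uniq : ∀ q : EuclideanSpace ℝ (Fin n), infDist q M < ν → ∀ z z', z ∈ M →
      dist q z = infDist q M → z' ∈ M → dist q z' = infDist q M → z = z' := by
    intro q hq z z' hz hdz hz' hdz'
    obtain ⟨w, -, hw⟩ := hreach q hq
    rw [hw z ⟨hz, hdz⟩, hw z' ⟨hz', hdz'⟩]
  -- the working region
  set K : Set (EuclideanSpace ℝ (Fin n)) :=
    {w | dist w y ≤ T} ∩ {w | α' / 2 ≤ infDist w M} with hKdef
  have hKclosed : IsClosed K :=
    (isClosed_le (by fun_prop) continuous_const).inter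
      (isClosed_le continuous_const (continuous_infDist_pt M))
  have hKlt : ∀ q ∈ K, infDist q M < ν := by
    intro q hq
    exact lt_of_le_of_lt (le_trans (infDist_le_dist_of_mem hy) hq.1) hTν
  -- uniform continuity of the foot map on K
  have UC : ∀ ε : ℝ, 0 < ε → ∃ δ : ℝ, 0 < δ ∧ ∀ q ∈ K, ∀ q' ∈ K,
      dist q q' ≤ δ → dist (ξ q) (ξ q') ≤ ε := by
    intro ε hε
    set Bad : Set ((EuclideanSpace ℝ (Fin n)) × (EuclideanSpace ℝ (Fin n)) ×
        (EuclideanSpace ℝ (Fin n)) × (EuclideanSpace ℝ (Fin n))) :=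
      (Prod.fst ⁻¹' K) ∩ ((fun b => b.2.1) ⁻¹' K) ∩ ((fun b => b.2.2.1) ⁻¹' M) ∩
      ((fun b => b.2.2.2) ⁻¹' M) ∩ {b | dist b.1 b.2.2.1 = infDist b.1 M} ∩
      {b | dist b.2.1 b.2.2.2 = infDist b.2.1 M} ∩ {b | ε ≤ dist b.2.2.1 b.2.2.2} with hBadDef
    by_cases hne : Bad.Nonempty
    · have hBadClosed : IsClosed Bad := by
        refine ((((((hKclosed.preimage continuous_fst).inter
          (hKclosed.preimage (by fun_prop))).inter
          (hMcl.preimage (by fun_prop))).inter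
          (hMcl.preimage (by fun_prop))).inter
          (isClosed_eq (by fun_prop) ((continuous_infDist_pt M).comp continuous_fst))).inter
          (isClosed_eq (by fun_prop) ((continuous_infDist_pt M).comp (by fun_prop)))).inter
          (isClosed_le continuous_const (by fun_prop))
      have hBadSub : Bad ⊆ (closedBall y T) ×ˢ ((closedBall y T) ×ˢ
          ((closedBall y (2*T)) ×ˢ (closedBall y (2*T)))) := by
        rintro ⟨q, q', z, z'⟩ hb
        obtain ⟨⟨⟨⟨⟨⟨h1, h2⟩, h3⟩, h4⟩, h5⟩, h6⟩, h7⟩ := hb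
        simp only [Set.mem_preimage, Set.mem_setOf_eq] at h1 h2 h3 h4 h5 h6 h7
        have hq1 : dist q y ≤ T := h1.1
        have hq2 : dist q' y ≤ T := h2.1
        have hz1 : dist z y ≤ 2*T := by
          have : dist z q = infDist q M := by rw [dist_comm]; exact h5
          calc dist z y ≤ dist z q + dist q y := dist_triangle _ _ _
          _ ≤ infDist q M + T := by rw [this]; linarith
          _ ≤ dist q y + T := by linarith [infDist_le_dist_of_mem (s := M) (x := q) hy]
          _ ≤ 2*T := by linarith
        have hz2 : dist z' y ≤ 2*T := by
          have : dist z' q' = infDist q' M := by rw [dist_comm]; exact h6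
          calc dist z' y ≤ dist z' q' + dist q' y := dist_triangle _ _ _
          _ ≤ infDist q' M + T := by rw [this]; linarith
          _ ≤ dist q' y + T := by linarith [infDist_le_dist_of_mem (s := M) (x := q') hy]
          _ ≤ 2*T := by linarith
        exact ⟨hq1, hq2, hz1, hz2⟩
      have hBadCmp : IsCompact Bad :=
        IsCompact.of_isClosed_subset
          ((isCompact_closedBall y T).prod ((isCompact_closedBall y T).prod
            ((isCompact_closedBall y (2*T)).prod (isCompact_closedBall y (2*T)))))
          hBadClosed hBadSub
      obtain ⟨b₀, hb₀, hmin⟩ := hBadCmp.exists_isMinOn hne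
        (Continuous.continuousOn (by fun_prop : Continuous fun b :
          (EuclideanSpace ℝ (Fin n)) × (EuclideanSpace ℝ (Fin n)) ×
          (EuclideanSpace ℝ (Fin n)) × (EuclideanSpace ℝ (Fin n)) => dist b.1 b.2.1))
      obtain ⟨⟨⟨⟨⟨⟨g1, g2⟩, g3⟩, g4⟩, g5⟩, g6⟩, g7⟩ := hb₀
      simp only [Set.mem_preimage, Set.mem_setOf_eq] at g1 g2 g3 g4 g5 g6 g7
      have hδ₀pos : 0 < dist b₀.1 b₀.2.1 := by
        rcases eq_or_lt_of_le (dist_nonneg (x := b₀.1) (y := b₀.2.1)) with he | hlt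
        · exfalso
          have heq : b₀.1 = b₀.2.1 := dist_eq_zero.mp he.symm
          have g6' : dist b₀.1 b₀.2.2.2 = infDist b₀.1 M := by rw [heq]; exact g6
          have := uniq b₀.1 (hKlt _ g1) b₀.2.2.1 b₀.2.2.2 g3 g5 g4 g6'
          rw [this, dist_self] at g7
          linarith
        · exact hlt
      refine ⟨dist b₀.1 b₀.2.1 / 2, by linarith, ?_⟩
      intro q hq q' hq' hd
      by_contra hcon
      push_neg at hcon
      have hmem : (q, q', ξ q, ξ q') ∈ Bad := by
        refine ⟨⟨⟨⟨⟨⟨hq, hq'⟩, hξM q⟩, hξM q'⟩, hξd q⟩, hξd q'⟩, hcon.le⟩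
      have := hmin hmem
      simp only [Set.mem_setOf_eq] at this
      linarith
    · refine ⟨1, one_pos, fun q hq q' hq' _ => ?_⟩
      by_contra hcon
      push_neg at hcon
      exact hne ⟨(q, q', ξ q, ξ q'),
        ⟨⟨⟨⟨⟨⟨hq, hq'⟩, hξM q⟩, hξM q'⟩, hξd q⟩, hξd q'⟩, hcon.le⟩⟩
  -- Euler scheme: approximate far points on the normal ray
  have hTΔ : α' + Δ = T := by rw [hΔdef]; ring
  have claim : ∀ ε' : ℝ, 0 < ε' → ∃ Q : EuclideanSpace ℝ (Fin n),
      dist Q y ≤ T ∧ dist Q p ≤ Δ ∧ T - ε' ≤ infDist Q M := by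
    intro ε' hε'
    obtain ⟨εx, hεxdef⟩ : ∃ v : ℝ, v = min (α' / 2) (ε' * α' / (2 * Δ)) := ⟨_, rfl⟩
    have hεxpos : 0 < εx := by rw [hεxdef]; exact lt_min (by linarith) (by positivity)
    have hεxle : εx ≤ α' / 2 := by rw [hεxdef]; exact min_le_left _ _
    have hεxle2 : εx ≤ ε' * α' / (2 * Δ) := by rw [hεxdef]; exact min_le_right _ _
    obtain ⟨θ, hθdef⟩ : ∃ v : ℝ, v = 2 * εx / α' := ⟨_, rfl⟩
    have hθ0 : 0 < θ := by rw [hθdef]; positivity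
    have hθ1 : θ ≤ 1 := by rw [hθdef, div_le_one hα'pos]; linarith
    have h2εx : 2 * εx = θ * α' := by rw [hθdef]; field_simp
    obtain ⟨δ, hδpos, hδ⟩ := UC εx hεxpos
    obtain ⟨c, hcdef⟩ : ∃ v : ℝ, v = min δ (α' / 4) := ⟨_, rfl⟩
    have hcpos : 0 < c := by rw [hcdef]; exact lt_min hδpos (by linarith)
    obtain ⟨N, hN⟩ := exists_nat_gt (Δ / c)
    have hN0 : 0 < (N : ℝ) := lt_trans (div_pos hΔpos hcpos) hN
    obtain ⟨h, hhdef⟩ : ∃ v : ℝ, v = Δ / N := ⟨_, rfl⟩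
    have hhpos : 0 < h := by rw [hhdef]; exact div_pos hΔpos hN0
    have hNh : (N : ℝ) * h = Δ := by rw [hhdef]; field_simp
    have hhc : h ≤ c := by
      rw [hhdef, div_le_iff₀ hN0]
      have := (div_lt_iff₀ hcpos).mp hN
      nlinarith
    have hhδ : h ≤ δ := le_trans hhc (by rw [hcdef]; exact min_le_left _ _)
    have hhα : h ≤ α' / 4 := le_trans hhc (by rw [hcdef]; exact min_le_right _ _)
    -- Euler iteration along the (approximate) normal direction
    obtain ⟨seq, seq_zero, seq_succ⟩ : ∃ s : ℕ → EuclideanSpace ℝ (Fin n), s 0 = p ∧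
        ∀ j, s (j + 1) = s j + (h / dist (s j) (ξ (s j))) • (s j - ξ (s j)) :=
      ⟨fun j => (fun q => q + (h / dist q (ξ q)) • (q - ξ q))^[j] p, rfl,
        fun j => Function.iterate_succ_apply' _ j p⟩
    have main : ∀ j : ℕ, j ≤ N →
        dist (seq j) y ≤ α' + j * h ∧ dist (seq j) p ≤ j * h ∧
        α' + j * h * (1 - θ) ≤ infDist (seq j) M := by
      intro j
      induction j with
      | zero =>
        intro _
        rw [seq_zero]
        refine ⟨by simp [hpy], by simp, by simp [hpd]⟩
      | succ j ih =>
        intro hj1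
        have hj : j ≤ N := Nat.le_of_succ_le hj1
        obtain ⟨iha, ihb, ihc⟩ := ih hj
        have hjc : (j : ℝ) ≤ (N : ℝ) := Nat.cast_le.mpr hj
        have hj1c : (j : ℝ) + 1 ≤ (N : ℝ) := by exact_mod_cast hj1
        have hjh : (j : ℝ) * h ≤ Δ := by
          rw [← hNh]; exact mul_le_mul_of_nonneg_right hjc hhpos.le
        have hj1h : ((j : ℝ) + 1) * h ≤ Δ := by
          rw [← hNh]; exact mul_le_mul_of_nonneg_right hj1c hhpos.le
        have hcnn : 0 ≤ (j : ℝ) * h * (1 - θ) :=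
          mul_nonneg (mul_nonneg (Nat.cast_nonneg j) hhpos.le) (by linarith)
        have hdqa : α' ≤ infDist (seq j) M := by linarith
        have hdqpos : 0 < infDist (seq j) M := lt_of_lt_of_le hα'pos hdqa
        have hdz : dist (seq j) (ξ (seq j)) = infDist (seq j) M := hξd (seq j)
        have hstep' : seq (j + 1)
            = seq j + (h / infDist (seq j) M) • (seq j - ξ (seq j)) := by
          rw [seq_succ j, hdz]
        have hnv : ‖seq j - ξ (seq j)‖ = infDist (seq j) M := by
          rw [← dist_eq_norm]; exact hdz
        have hsnn : 0 ≤ h / infDist (seq j) M := div_nonneg hhpos.le hdqpos.le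
        have hsd : h / infDist (seq j) M * infDist (seq j) M = h :=
          div_mul_cancel₀ h (ne_of_gt hdqpos)
        have hdstep : dist (seq (j + 1)) (seq j) = h := by
          rw [hstep', dist_eq_norm, add_sub_cancel_left, norm_smul, Real.norm_eq_abs,
            abs_of_nonneg hsnn, hnv]
          exact hsd
        have haa : dist (seq (j + 1)) y ≤ α' + (↑(j + 1)) * h := by
          calc dist (seq (j + 1)) y ≤ dist (seq (j + 1)) (seq j) + dist (seq j) y :=
            dist_triangle _ _ _
          _ ≤ h + (α' + j * h) := by rw [hdstep]; linarith
          _ = α' + (↑(j + 1)) * h := by push_cast; ring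
        have hbb : dist (seq (j + 1)) p ≤ (↑(j + 1)) * h := by
          calc dist (seq (j + 1)) p ≤ dist (seq (j + 1)) (seq j) + dist (seq j) p :=
            dist_triangle _ _ _
          _ ≤ h + j * h := by rw [hdstep]; linarith
          _ = (↑(j + 1)) * h := by push_cast; ring
        have hqK : seq j ∈ K := by
          refine ⟨?_, ?_⟩
          · show dist (seq j) y ≤ T
            linarith
          · show α' / 2 ≤ infDist (seq j) M
            linarith
        have hq'low : infDist (seq j) M - h ≤ infDist (seq (j + 1)) M := by
          have := infDist_le_infDist_add_dist (x := seq j) (y := seq (j + 1)) (s := M)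
          rw [dist_comm] at this
          rw [hdstep] at this
          linarith
        have hq'K : seq (j + 1) ∈ K := by
          refine ⟨?_, ?_⟩
          · show dist (seq (j + 1)) y ≤ T
            calc dist (seq (j + 1)) y ≤ α' + (↑(j + 1)) * h := haa
            _ ≤ α' + Δ := by push_cast; linarith
            _ = T := hTΔ
          · show α' / 2 ≤ infDist (seq (j + 1)) M
            linarith
        have hzz' : dist (ξ (seq j)) (ξ (seq (j + 1))) ≤ εx := by
          refine hδ _ hqK _ hq'K ?_
          rw [dist_comm]
          rw [hdstep]
          exact hhδ
        -- key quadratic estimate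
        have hwnorm : infDist (seq j) M ≤ ‖seq j - ξ (seq (j + 1))‖ := by
          rw [← dist_eq_norm]; exact infDist_le_dist_of_mem (hξM _)
        have hX : dist (seq (j + 1)) (ξ (seq (j + 1))) = infDist (seq (j + 1)) M := hξd _
        have hvec : seq (j + 1) - ξ (seq (j + 1))
            = (seq j - ξ (seq (j + 1))) + (h / infDist (seq j) M) • (seq j - ξ (seq j)) := by
          rw [hstep', add_sub_right_comm]
        have hXval : infDist (seq (j + 1)) M
            = ‖(seq j - ξ (seq (j + 1))) + (h / infDist (seq j) M) • (seq j - ξ (seq j))‖ := by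
          rw [← hX, dist_eq_norm, hvec]
        have hexp : ‖(seq j - ξ (seq (j + 1))) + (h / infDist (seq j) M) • (seq j - ξ (seq j))‖^2
            = ‖seq j - ξ (seq (j + 1))‖^2
              + 2 * ((h / infDist (seq j) M)
                  * inner ℝ (seq j - ξ (seq (j + 1))) (seq j - ξ (seq j)))
              + h^2 := by
          rw [norm_add_sq_real, real_inner_smul_right, norm_smul, Real.norm_eq_abs,
            abs_of_nonneg hsnn, hnv, hsd]
        have hdec : (inner ℝ (seq j - ξ (seq (j + 1))) (seq j - ξ (seq j)) : ℝ)
            = infDist (seq j) M ^ 2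
              + inner ℝ (ξ (seq j) - ξ (seq (j + 1))) (seq j - ξ (seq j)) := by
          have hsplit : seq j - ξ (seq (j + 1))
              = (seq j - ξ (seq j)) + (ξ (seq j) - ξ (seq (j + 1))) := by abel
          rw [hsplit, inner_add_left, real_inner_self_eq_norm_sq, hnv]
        have hCS : -(εx * infDist (seq j) M)
            ≤ (inner ℝ (ξ (seq j) - ξ (seq (j + 1))) (seq j - ξ (seq j)) : ℝ) := by
          have h1 := real_inner_le_norm (ξ (seq (j + 1)) - ξ (seq j)) (seq j - ξ (seq j))
          have h2 : ‖ξ (seq (j + 1)) - ξ (seq j)‖ ≤ εx := by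
            rw [← dist_eq_norm, dist_comm]; exact hzz'
          have h3 : (inner ℝ (ξ (seq (j + 1)) - ξ (seq j)) (seq j - ξ (seq j)) : ℝ)
              ≤ εx * infDist (seq j) M := by
            calc (inner ℝ (ξ (seq (j + 1)) - ξ (seq j)) (seq j - ξ (seq j)) : ℝ)
                ≤ ‖ξ (seq (j + 1)) - ξ (seq j)‖ * ‖seq j - ξ (seq j)‖ := h1
            _ ≤ εx * infDist (seq j) M := by
                rw [hnv]; exact mul_le_mul_of_nonneg_right h2 hdqpos.le
          have h4 : (inner ℝ (ξ (seq j) - ξ (seq (j + 1))) (seq j - ξ (seq j)) : ℝ)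
              = - inner ℝ (ξ (seq (j + 1)) - ξ (seq j)) (seq j - ξ (seq j)) := by
            rw [← inner_neg_left]
            congr 1
            abel
          rw [h4]
          linarith
        have e3 : infDist (seq j) M ^ 2 - εx * infDist (seq j) M
            ≤ (inner ℝ (seq j - ξ (seq (j + 1))) (seq j - ξ (seq j)) : ℝ) := by
          rw [hdec]; linarith
        -- pass to scalar atoms
        obtain ⟨I, hI⟩ : ∃ v : ℝ,
            v = (inner ℝ (seq j - ξ (seq (j + 1))) (seq j - ξ (seq j)) : ℝ) := ⟨_, rfl⟩
        obtain ⟨W, hW⟩ : ∃ v : ℝ, v = ‖seq j - ξ (seq (j + 1))‖ := ⟨_, rfl⟩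
        obtain ⟨dd, hdd⟩ : ∃ v : ℝ, v = infDist (seq j) M := ⟨_, rfl⟩
        obtain ⟨XX, hXX⟩ : ∃ v : ℝ, v = infDist (seq (j + 1)) M := ⟨_, rfl⟩
        have e1 : XX^2 = W^2 + 2 * ((h / dd) * I) + h^2 := by
          rw [hI, hW, hdd, hXX, hXval, hexp]
        have e2 : dd ≤ W := by rw [hdd, hW]; exact hwnorm
        have e3' : dd^2 - εx * dd ≤ I := by rw [hI, hdd]; exact e3
        have hdd0 : 0 < dd := by rw [hdd]; exact hdqpos
        have hdda : α' ≤ dd := by rw [hdd]; exact hdqa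
        have hXX0 : 0 ≤ XX := by rw [hXX]; exact infDist_nonneg
        have e4 : (h / dd) * (dd^2 - εx * dd) ≤ (h / dd) * I :=
          mul_le_mul_of_nonneg_left e3' (div_nonneg hhpos.le hdd0.le)
        have e5 : (h / dd) * (dd^2 - εx * dd) = h * dd - h * εx := by
          field_simp
        have e2' : dd^2 ≤ W^2 := pow_le_pow_left₀ hdd0.le e2 2
        have hX2 : (dd + h)^2 - 2 * h * εx ≤ XX^2 := by nlinarith only [e1, e2', e4, e5]
        have hG0 : 0 ≤ dd + h - θ * h := by
          have hmn := mul_nonneg hhpos.le (sub_nonneg.mpr hθ1)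
          nlinarith only [hmn, hdd0.le]
        have hGX : (dd + h - θ * h)^2 ≤ XX^2 := by
          have key : 0 ≤ θ * h * (2 * (dd + h) - θ * h - α') := by
            apply mul_nonneg (mul_nonneg hθ0.le hhpos.le)
            have hmn2 := mul_nonneg hhpos.le (sub_nonneg.mpr hθ1)
            nlinarith only [hdda, hhpos.le, hα'pos, hmn2]
          have h2εxh : 2 * h * εx = θ * h * α' := by
            calc 2 * h * εx = h * (2 * εx) := by ring
            _ = h * (θ * α') := by rw [h2εx]
            _ = θ * h * α' := by ring
          nlinarith only [hX2, key, h2εxh]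
        have hstep2 : infDist (seq j) M + h - θ * h ≤ infDist (seq (j + 1)) M := by
          rw [← hdd, ← hXX]
          have hs := Real.sqrt_le_sqrt hGX
          rw [Real.sqrt_sq hG0, Real.sqrt_sq hXX0] at hs
          exact hs
        refine ⟨haa, hbb, ?_⟩
        have : α' + (↑(j + 1)) * h * (1 - θ) = (α' + j * h * (1 - θ)) + (h - θ * h) := by
          push_cast; ring
        rw [this]
        linarith
    obtain ⟨ma, mb, mc⟩ := main N (le_refl N)
    refine ⟨seq N, ?_, ?_, ?_⟩
    · calc dist (seq N) y ≤ α' + N * h := ma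
      _ = α' + Δ := by rw [hNh]
      _ = T := hTΔ
    · calc dist (seq N) p ≤ N * h := mb
      _ = Δ := hNh
    · have h2 : 2 * Δ * εx ≤ ε' * α' := by
        have hm := mul_le_mul_of_nonneg_left hεxle2 (show (0:ℝ) ≤ 2 * Δ by linarith)
        calc 2 * Δ * εx ≤ 2 * Δ * (ε' * α' / (2 * Δ)) := hm
        _ = ε' * α' := by field_simp
      have hΔθ : Δ * θ ≤ ε' := by
        rw [hθdef, show Δ * (2 * εx / α') = (2 * Δ * εx) / α' by ring, div_le_iff₀ hα'pos]
        nlinarith [h2, hα'pos]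
      have hrw : α' + N * h * (1 - θ) = T - Δ * θ := by
        rw [hNh, ← hTΔ]
        ring
      rw [hrw] at mc
      linarith
  -- extract exact point via max of infDist on compact set
  set C : Set (EuclideanSpace ℝ (Fin n)) := closedBall y T ∩ closedBall p Δ with hCdef
  have hCcomp : IsCompact C := (isCompact_closedBall y T).inter_right isClosed_closedBall
  have hCne : C.Nonempty := by
    refine ⟨p, ?_, ?_⟩
    · rw [mem_closedBall, hpy]; linarith
    · rw [mem_closedBall, dist_self]; linarith
  obtain ⟨q₀, hq₀C, hq₀max⟩ := hCcomp.exists_isMaxOn hCne ((continuous_infDist_pt M).continuousOn)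
  have hTle : T ≤ infDist q₀ M := by
    by_contra hcon
    push_neg at hcon
    obtain ⟨Q, hQ1, hQ2, hQ3⟩ := claim ((T - infDist q₀ M) / 2) (by linarith)
    have hQC : Q ∈ C := ⟨by rwa [mem_closedBall], by rwa [mem_closedBall]⟩
    have := hq₀max hQC
    simp only [Set.mem_setOf_eq] at this
    linarith
  have hdyq : dist q₀ y ≤ T := by
    have := hq₀C.1; rwa [mem_closedBall] at this
  have hinf : infDist q₀ M = T :=
    le_antisymm (le_trans (infDist_le_dist_of_mem hy) hdyq) hTle
  have hdy : dist q₀ y = T := le_antisymm hdyq (by rw [← hinf]; exact infDist_le_dist_of_mem hy)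
  have hdpq : dist q₀ p = Δ := by
    have h1 : dist q₀ p ≤ Δ := by have := hq₀C.2; rwa [mem_closedBall] at this
    have h2 : T ≤ dist q₀ p + α' := by
      calc T = dist q₀ y := hdy.symm
      _ ≤ dist q₀ p + dist p y := dist_triangle _ _ _
      _ = dist q₀ p + α' := by rw [hpy]
    linarith [h2]
  -- vector geometry : q₀ is the midpoint of x and y
  have hA : ‖p - y‖ = α' := by rw [← dist_eq_norm, hpy]
  have hB : ‖q₀ - p‖ = Δ := by rw [← dist_eq_norm]; exact hdpq
  have hAB : ‖(q₀ - p) + (p - y)‖ = T := by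
    rw [sub_add_sub_cancel, ← dist_eq_norm]; exact hdy
  have hTsum : T = Δ + α' := by rw [hΔdef]; ring
  have hinner : (inner ℝ (q₀ - p) (p - y) : ℝ) = Δ * α' := by
    have hexp := norm_add_sq_real (q₀ - p) (p - y)
    rw [hAB, hA, hB, hTsum] at hexp
    nlinarith [hexp]
  -- equality in Cauchy-Schwarz : α' • (q₀ - p) = Δ • (p - y)
  have hveq : α' • (q₀ - p) = Δ • (p - y) := by
    have hns : ‖α' • (q₀ - p) - Δ • (p - y)‖ ^ 2 = 0 := by
      rw [norm_sub_sq_real, norm_smul, norm_smul, real_inner_smul_left, real_inner_smul_right,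
        hinner, hA, hB, Real.norm_eq_abs, Real.norm_eq_abs, abs_of_pos hα'pos, abs_of_pos hΔpos]
      ring
    have := pow_eq_zero_iff (n := 2) (by norm_num) |>.mp hns
    rw [norm_eq_zero, sub_eq_zero] at this
    exact this
  -- p - y = (α'/L) • (x - y)
  set L : ℝ := ρ + α' with hLdef
  have hLpos : 0 < L := by rw [hLdef]; linarith
  have hApy : p - y = (α' / L) • (x - y) := by
    obtain ⟨a, b, ha0, hb0, hab, hpab⟩ := hseg
    have hb1 : b = 1 - a := by linarith
    have hpy' : p - y = a • (x - y) := by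
      rw [← hpab, hb1, smul_sub, sub_smul, one_smul]
      abel
    have hnorm : a * L = α' := by
      have : ‖p - y‖ = ‖a • (x - y)‖ := by rw [hpy']
      rw [hA, norm_smul, Real.norm_eq_abs, abs_of_nonneg ha0, ← dist_eq_norm, hxy] at this
      linarith
    have ha' : a = α' / L := by field_simp; linarith [hnorm]
    rw [hpy', ha']
  -- q₀ - y = (1/2) • (x - y)
  have hq0y : q₀ - y = ((1:ℝ)/2) • (x - y) := by
    have h1 : q₀ - p = (Δ / α') • (p - y) := by
      have h2 : q₀ - p = (α')⁻¹ • (Δ • (p - y)) := by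
        rw [← hveq, smul_smul, inv_mul_cancel₀ (ne_of_gt hα'pos), one_smul]
      rw [h2, smul_smul, div_eq_inv_mul]
    have h2 : q₀ - y = (q₀ - p) + (p - y) := by abel
    have hL2T : L = 2 * T := by rw [hLdef, hT]; ring
    rw [h2, h1, hApy, smul_smul, ← add_smul]
    congr 1
    rw [hΔdef, hL2T]
    field_simp
    ring
  have hdx : dist q₀ x = T := by
    have h3 : q₀ - x = (-(1:ℝ)/2) • (x - y) := by
      have h4 : q₀ - x = (q₀ - y) - (x - y) := by abel
      rw [h4, hq0y]
      module
    rw [dist_eq_norm, h3, norm_smul, Real.norm_eq_abs, ← dist_eq_norm, hxy]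
    rw [show |(-(1:ℝ)/2)| = 1/2 by norm_num]
    rw [hT]; ring
  -- two nearest points at q₀ : contradiction
  obtain ⟨w, hwmem, hwuniq⟩ := hreach q₀ (by rw [hinf]; exact hTν)
  have hxw : x = w := hwuniq x ⟨hx, by rw [hdx, hinf]⟩
  have hyw : y = w := hwuniq y ⟨hy, by rw [hdy, hinf]⟩
  have hxyeq : x = y := hxw.trans hyw.symm
  rw [hxyeq, dist_self] at hxy
  linarith
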